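/- Let f(v) = -v + c with c > 0 and let s : (0,∞) → ℝ be convex with f(v) ≤ s(v) for all v > 0, s bounded above by c, lim_{v→0⁺} s(v) = c, and suppose there exists v₀ > 0 with s(v₀) > f(v₀). Then the set {v > 0 : s(v) = f(v)} is an interval of the form (0, b] for some b > 0, or is empty, i.e., it is downward closed in (0,∞): if s(v) = f(v) and 0 < u ≤ v then s(u) = f(u). -/

import Mathlib

open Set Filter

/-- The contact set `{v > 0 : s v = f v}` of a convex value function `s` with the
affine reward `f v = -v + c` is downward closed in `(0,∞)`. -/
theorem stmt2 (c : ℝ) (hc : 0 < c) (s : ℝ → ℝ)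
    (hconv : ConvexOn ℝ (Set.Ioi (0:ℝ)) s)
    (hfs : ∀ v > (0:ℝ), -v + c ≤ s v)
    (hsc : ∀ v > (0:ℝ), s v ≤ c)
    (hlim : Filter.Tendsto s (nhdsWithin 0 (Set.Ioi 0)) (nhds c))
    (v₀ : ℝ) (hv₀ : 0 < v₀) (hstrict : -v₀ + c < s v₀) :
    ∀ u v : ℝ, 0 < u → u ≤ v → s v = -v + c → s u = -u + c := by
  intro u v hu huv hsv
  rcases eq_or_lt_of_le huv with rfl | huv'
  · exact hsv
  have hv : (0:ℝ) < v := lt_trans hu huv'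
  have key : s u ≤ -u + c := by
    set g : ℝ → ℝ := fun t => ((v - u) / (v - t)) * s t + ((u - t) / (v - t)) * s v
      with hg
    have hev : ∀ᶠ t in nhdsWithin 0 (Set.Ioi 0), s u ≤ g t := by
      filter_upwards [Ioo_mem_nhdsGT_of_mem ⟨le_refl (0:ℝ), hu⟩] with t ht
      have ht0 : 0 < t := ht.1
      have htu : t < u := ht.2
      have htv : 0 < v - t := by linarith
      have ha : (0:ℝ) ≤ (v - u) / (v - t) := div_nonneg (by linarith) htv.le
      have hb : (0:ℝ) ≤ (u - t) / (v - t) := div_nonneg (by linarith) htv.le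
      have hab : (v - u) / (v - t) + (u - t) / (v - t) = 1 := by
        field_simp
        ring
      have := hconv.2 (Set.mem_Ioi.2 ht0) (Set.mem_Ioi.2 hv) ha hb hab
      simp only [smul_eq_mul] at this
      have hcomb : (v - u) / (v - t) * t + (u - t) / (v - t) * v = u := by
        field_simp; ring
      rw [hcomb] at this
      exact this
    have hlim1 : Tendsto (fun t : ℝ => (v - u) / (v - t)) (nhdsWithin 0 (Set.Ioi 0))
        (nhds ((v - u) / v)) := by
      have : Tendsto (fun t : ℝ => (v - u) / (v - t)) (nhds 0) (nhds ((v - u) / v)) := by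
        have hne : v - (0:ℝ) ≠ 0 := by simpa using hv.ne'
        have := Tendsto.div (tendsto_const_nhds (x := v - u))
          (tendsto_const_nhds.sub (tendsto_id (α := ℝ))) hne
        simpa [Pi.div_def] using this
      exact this.mono_left nhdsWithin_le_nhds
    have hlim2 : Tendsto (fun t : ℝ => (u - t) / (v - t)) (nhdsWithin 0 (Set.Ioi 0))
        (nhds (u / v)) := by
      have : Tendsto (fun t : ℝ => (u - t) / (v - t)) (nhds 0) (nhds (u / v)) := by
        have hne : v - (0:ℝ) ≠ 0 := by simpa using hv.ne'
        have hca : ContinuousAt (fun t : ℝ => (u - t) / (v - t)) 0 :=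
          ContinuousAt.div (by fun_prop) (by fun_prop) hne
        simpa using hca.tendsto
      exact this.mono_left nhdsWithin_le_nhds
    have hglim : Tendsto g (nhdsWithin 0 (Set.Ioi 0))
        (nhds ((v - u) / v * c + u / v * s v)) :=
      (hlim1.mul hlim).add (hlim2.mul tendsto_const_nhds)
    have hval : (v - u) / v * c + u / v * s v = -u + c := by
      rw [hsv]; field_simp; ring
    rw [hval] at hglim
    exact ge_of_tendsto hglim hev
  exact le_antisymm key (hfs u hu)
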